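/- For every finite Sidon set A of integers with |A| = k and every positive integer T, the diameter satisfies max A − min A ≥ k²T/(T + k − 1) − T (the Erdős–Turán Sidon set inequality). -/

import Mathlib

/-- A finite set of integers is Sidon if `a + b = c + d` implies `{a,b} = {c,d}`. -/
def IsSidon (A : Finset ℤ) : Prop :=
  ∀ a ∈ A, ∀ b ∈ A, ∀ c ∈ A, ∀ d ∈ A,
    a + b = c + d → (a = c ∧ b = d) ∨ (a = d ∧ b = c)

/-- The set of positive differences of elements of `X`. -/
def posDiffs (X : Finset ℤ) : Finset ℤ :=
  ((X ×ˢ X).filter (fun p => p.2 < p.1)).image (fun p => p.1 - p.2)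

/-- Gauss-type sum: `∑_{d=1}^{T-1} (T-d) = T(T-1)/2`, stated over `ℤ`-indexed `Ico`. -/
lemma aux_gauss (T : ℕ) :
    2 * ∑ d ∈ Finset.Ico (1 : ℤ) (T : ℤ), ((T : ℤ) - |d|).toNat = T * T - T := by
  have himg : Finset.Ico (1 : ℤ) (T : ℤ)
      = (Finset.range (T - 1)).image (fun i : ℕ => (i : ℤ) + 1) := by
    ext d
    simp only [Finset.mem_Ico, Finset.mem_image, Finset.mem_range]
    constructor
    · intro h
      refine ⟨(d - 1).toNat, by omega, by omega⟩
    · rintro ⟨i, hi, rfl⟩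
      omega
  rw [himg, Finset.sum_image (by intro x hx y hy h; have h' : (x : ℤ) + 1 = (y : ℤ) + 1 := h; omega)]
  have hsummand : ∀ i ∈ Finset.range (T - 1),
      ((T : ℤ) - |(i : ℤ) + 1|).toNat = (T - 1) - i := by
    intro i hi
    simp only [Finset.mem_range] at hi
    rw [abs_of_pos (by positivity)]
    omega
  rw [Finset.sum_congr rfl hsummand]
  -- `∑_{i < n} (n - i) = (∑_{i<n} i) + n` with `n = T - 1`
  set n := T - 1 with hn
  have h1 : ∑ i ∈ Finset.range n, (i + 1) = ∑ i ∈ Finset.range n, (n - i) := by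
    rw [← Finset.sum_range_reflect (fun j => n - j) n]
    exact Finset.sum_congr rfl (fun i hi => by
      simp only [Finset.mem_range] at hi; omega)
  have h2 : ∑ i ∈ Finset.range n, (i + 1)
      = (∑ i ∈ Finset.range n, i) + n := by
    rw [Finset.sum_add_distrib, Finset.sum_const, smul_eq_mul, mul_one, Finset.card_range]
  have h3 := Finset.sum_range_id_mul_two n
  -- goal: 2 * ∑ (n - i) = T*T - T
  have h4 : 2 * ∑ i ∈ Finset.range n, (n - i) = n * (n - 1) + 2 * n := by omega
  rw [h4]
  rcases Nat.eq_zero_or_pos T with rfl | hT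
  · simp [hn]
  · obtain ⟨s, rfl⟩ : ∃ s, T = s + 1 := ⟨T - 1, by omega⟩
    have hns : n = s := by omega
    rw [hns]
    rcases Nat.eq_zero_or_pos s with rfl | hs
    · simp
    · zify [hs, Nat.le_mul_of_pos_left (s + 1) (show 0 < s + 1 by omega)]
      ring

theorem stmt_6 (A : Finset ℤ) (hA : IsSidon A) (hne : A.Nonempty)
    (k : ℕ) (hk : A.card = k) (T : ℕ) (hT : 0 < T) :
    ((A.max' hne - A.min' hne : ℤ) : ℝ)
      ≥ (k : ℝ) ^ 2 * T / ((T : ℝ) + (k : ℝ) - 1) - T := by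
  classical
  have hk1 : 1 ≤ k := by rw [← hk]; exact Finset.card_pos.mpr hne
  set m := A.min' hne with hm
  set M := A.max' hne with hM
  have hmM : m ≤ M := A.min'_le _ (A.max'_mem hne)
  set J : Finset ℤ := Finset.Ico (m - T + 1) (M + 1) with hJdef
  set L : ℕ := (M - m).toNat with hL
  have hJcard : J.card = L + T := by
    rw [hJdef, Int.card_Ico]; omega
  set n : ℤ → ℕ := fun j => (A.filter (fun a => j ≤ a ∧ a < j + T)).card with hn
  have hAm : ∀ a ∈ A, m ≤ a ∧ a ≤ M := fun a ha => ⟨A.min'_le a ha, A.le_max' a ha⟩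
  -- each element lies in exactly T windows
  have hwin1 : ∀ a ∈ A, (J.filter (fun j => j ≤ a ∧ a < j + T)).card = T := by
    intro a ha
    have h := hAm a ha
    have heq : J.filter (fun j => j ≤ a ∧ a < j + T) = Finset.Ico (a - T + 1) (a + 1) := by
      ext j
      simp only [hJdef, Finset.mem_filter, Finset.mem_Ico]
      omega
    rw [heq, Int.card_Ico]; omega
  -- total count of window incidences
  have h1 : ∑ j ∈ J, n j = k * T := by
    calc ∑ j ∈ J, n j
        = ∑ j ∈ J, ∑ a ∈ A, (if j ≤ a ∧ a < j + T then 1 else 0) := by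
          refine Finset.sum_congr rfl fun j _ => ?_
          rw [hn]
          exact Finset.card_filter _ _
      _ = ∑ a ∈ A, ∑ j ∈ J, (if j ≤ a ∧ a < j + T then 1 else 0) := Finset.sum_comm
      _ = ∑ a ∈ A, (J.filter (fun j => j ≤ a ∧ a < j + T)).card := by
          refine Finset.sum_congr rfl fun a _ => ?_
          exact (Finset.card_filter _ _).symm
      _ = ∑ _a ∈ A, T := Finset.sum_congr rfl hwin1
      _ = k * T := by rw [Finset.sum_const, hk, smul_eq_mul]
  -- a pair lies in exactly (T - |a-b|)⁺ windows
  have hwin2 : ∀ a ∈ A, ∀ b ∈ A,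
      (J.filter (fun j => (j ≤ a ∧ a < j + T) ∧ (j ≤ b ∧ b < j + T))).card
        = ((T : ℤ) - |a - b|).toNat := by
    intro a ha b hb
    have h1' := hAm a ha; have h2' := hAm b hb
    have heq : J.filter (fun j => (j ≤ a ∧ a < j + T) ∧ (j ≤ b ∧ b < j + T))
        = Finset.Ico (max a b - T + 1) (min a b + 1) := by
      ext j
      simp only [hJdef, Finset.mem_filter, Finset.mem_Ico]
      omega
    rw [heq, Int.card_Ico]
    rcases le_total a b with h | h
    · rw [abs_of_nonpos (by omega)]; omega
    · rw [abs_of_nonneg (by omega)]; omega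
  -- second moment computation
  have h2 : ∑ j ∈ J, n j * n j
      = ∑ p ∈ A ×ˢ A, (J.filter (fun j =>
          (j ≤ p.1 ∧ p.1 < j + T) ∧ (j ≤ p.2 ∧ p.2 < j + T))).card := by
    have hstep : ∀ j : ℤ, n j * n j = ∑ p ∈ A ×ˢ A,
        (if (j ≤ p.1 ∧ p.1 < j + T) ∧ (j ≤ p.2 ∧ p.2 < j + T) then 1 else 0) := by
      intro j
      rw [hn]
      simp only [Finset.card_filter, Finset.sum_mul_sum, Finset.sum_product]
      refine Finset.sum_congr rfl fun a _ => Finset.sum_congr rfl fun b _ => ?_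
      by_cases h1' : j ≤ a ∧ a < j + T <;> by_cases h2' : j ≤ b ∧ b < j + T <;>
        simp [h1', h2']
    calc ∑ j ∈ J, n j * n j
        = ∑ j ∈ J, ∑ p ∈ A ×ˢ A,
            (if (j ≤ p.1 ∧ p.1 < j + T) ∧ (j ≤ p.2 ∧ p.2 < j + T) then 1 else 0) :=
          Finset.sum_congr rfl fun j _ => hstep j
      _ = ∑ p ∈ A ×ˢ A, ∑ j ∈ J,
            (if (j ≤ p.1 ∧ p.1 < j + T) ∧ (j ≤ p.2 ∧ p.2 < j + T) then 1 else 0) :=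
          Finset.sum_comm
      _ = _ := by
          refine Finset.sum_congr rfl fun p _ => ?_
          exact (Finset.card_filter _ _).symm
  -- split into diagonal and off-diagonal
  have hsplit := Finset.sum_filter_add_sum_filter_not (A ×ˢ A)
    (fun p : ℤ × ℤ => p.1 = p.2)
    (fun p => (J.filter (fun j =>
      (j ≤ p.1 ∧ p.1 < j + T) ∧ (j ≤ p.2 ∧ p.2 < j + T))).card)
  -- diagonal part
  have hdiag : ∑ p ∈ (A ×ˢ A).filter (fun p => p.1 = p.2),
      (J.filter (fun j =>
        (j ≤ p.1 ∧ p.1 < j + T) ∧ (j ≤ p.2 ∧ p.2 < j + T))).card = k * T := by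
    have himg : (A ×ˢ A).filter (fun p => p.1 = p.2) = A.image (fun a => (a, a)) := by
      ext ⟨x, y⟩
      simp only [Finset.mem_filter, Finset.mem_product, Finset.mem_image, Prod.mk.injEq]
      constructor
      · rintro ⟨⟨hx, _⟩, rfl⟩; exact ⟨x, hx, rfl, rfl⟩
      · rintro ⟨a, ha, rfl, rfl⟩; exact ⟨⟨ha, ha⟩, rfl⟩
    rw [himg, Finset.sum_image (by intro x _ y _ h; simpa using congrArg Prod.fst h)]
    calc ∑ a ∈ A, (J.filter (fun j =>
          (j ≤ a ∧ a < j + T) ∧ (j ≤ a ∧ a < j + T))).card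
        = ∑ _a ∈ A, T := by
          refine Finset.sum_congr rfl fun a ha => ?_
          have hfe : J.filter (fun j => (j ≤ a ∧ a < j + T) ∧ (j ≤ a ∧ a < j + T))
              = J.filter (fun j => j ≤ a ∧ a < j + T) :=
            Finset.filter_congr (fun j _ => by tauto)
          rw [hfe]
          exact hwin1 a ha
      _ = k * T := by rw [Finset.sum_const, hk, smul_eq_mul]
  -- off-diagonal part
  have hoff : ∑ p ∈ (A ×ˢ A).filter (fun p => ¬ p.1 = p.2),
      (J.filter (fun j =>
        (j ≤ p.1 ∧ p.1 < j + T) ∧ (j ≤ p.2 ∧ p.2 < j + T))).card ≤ T * T - T := by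
    set P := (A ×ˢ A).filter (fun p : ℤ × ℤ => ¬ p.1 = p.2) with hP
    have hmemP : ∀ p ∈ P, p.1 ∈ A ∧ p.2 ∈ A ∧ p.1 ≠ p.2 := by
      intro p hp
      simp only [hP, Finset.mem_filter, Finset.mem_product] at hp
      exact ⟨hp.1.1, hp.1.2, hp.2⟩
    have hinj : ∀ p ∈ P, ∀ q ∈ P, p.1 - p.2 = q.1 - q.2 → p = q := by
      intro p hp q hq h
      obtain ⟨hp1, hp2, hpne⟩ := hmemP p hp
      obtain ⟨hq1, hq2, hqne⟩ := hmemP q hq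
      have hadd : p.1 + q.2 = q.1 + p.2 := by omega
      rcases hA p.1 hp1 q.2 hq2 q.1 hq1 p.2 hp2 hadd with ⟨h1', h2'⟩ | ⟨h1', h2'⟩
      · exact Prod.ext h1' h2'.symm
      · exact absurd h1' hpne
    have hsum_eq : ∑ p ∈ P, (J.filter (fun j =>
          (j ≤ p.1 ∧ p.1 < j + T) ∧ (j ≤ p.2 ∧ p.2 < j + T))).card
        = ∑ p ∈ P, ((T : ℤ) - |p.1 - p.2|).toNat := by
      refine Finset.sum_congr rfl fun p hp => ?_
      obtain ⟨hp1, hp2, _⟩ := hmemP p hp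
      exact hwin2 p.1 hp1 p.2 hp2
    have himg2 := Finset.sum_image (s := P) (f := fun d : ℤ => ((T : ℤ) - |d|).toNat)
      (g := fun p : ℤ × ℤ => p.1 - p.2) hinj
    rw [hsum_eq]
    refine le_trans (le_of_eq himg2.symm) ?_
    set D := P.image (fun p : ℤ × ℤ => p.1 - p.2) with hD
    have hD0 : ∀ d ∈ D, d ≠ 0 := by
      intro d hd
      simp only [hD, Finset.mem_image] at hd
      obtain ⟨p, hp, rfl⟩ := hd
      have := (hmemP p hp).2.2
      omega
    set E := (Finset.Ico (1 - (T : ℤ)) (T : ℤ)).erase 0 with hE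
    have hle1 : ∑ d ∈ D, ((T : ℤ) - |d|).toNat ≤ ∑ d ∈ E, ((T : ℤ) - |d|).toNat := by
      rw [← Finset.sum_filter_ne_zero D (f := fun d => ((T : ℤ) - |d|).toNat)]
      refine Finset.sum_le_sum_of_subset ?_
      intro d hd
      simp only [Finset.mem_filter] at hd
      have hd0 := hD0 d hd.1
      have habs : |d| < (T : ℤ) := by
        by_contra hcon
        exact hd.2 (by omega)
      have habs' := abs_lt.mp habs
      simp only [hE, Finset.mem_erase, Finset.mem_Ico]
      omega
    have hEsum : ∑ d ∈ E, ((T : ℤ) - |d|).toNat = T * T - T := by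
      have hEeq : E = Finset.Ico (1 - (T : ℤ)) 0 ∪ Finset.Ico (1 : ℤ) (T : ℤ) := by
        ext d
        simp only [hE, Finset.mem_erase, Finset.mem_Ico, Finset.mem_union]
        omega
      have hdisj : Disjoint (Finset.Ico (1 - (T : ℤ)) 0) (Finset.Ico (1 : ℤ) (T : ℤ)) := by
        rw [Finset.disjoint_left]
        intro d hd hd'
        simp only [Finset.mem_Ico] at hd hd'
        omega
      rw [hEeq, Finset.sum_union hdisj]
      have hnegimg : Finset.Ico (1 - (T : ℤ)) 0
          = (Finset.Ico (1 : ℤ) (T : ℤ)).image Neg.neg := by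
        ext d
        simp only [Finset.mem_Ico, Finset.mem_image]
        constructor
        · intro h; exact ⟨-d, by omega, by ring⟩
        · rintro ⟨x, hx, rfl⟩; omega
      rw [hnegimg, Finset.sum_image (by intro x _ y _ h; omega)]
      have : ∀ x ∈ Finset.Ico (1 : ℤ) (T : ℤ),
          ((T : ℤ) - |(-x)|).toNat = ((T : ℤ) - |x|).toNat := by
        intro x _; rw [abs_neg]
      rw [Finset.sum_congr rfl this]
      have := aux_gauss T
      omega
    calc ∑ d ∈ D, ((T : ℤ) - |d|).toNat ≤ ∑ d ∈ E, ((T : ℤ) - |d|).toNat := hle1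
      _ = T * T - T := hEsum
  -- combine: second moment bound
  have h2' : ∑ j ∈ J, n j * n j ≤ k * T + (T * T - T) := by
    rw [h2, ← hsplit]
    have := hdiag
    omega
  -- Cauchy–Schwarz over the windows (in ℝ)
  have hCS : ((k : ℝ) * T) ^ 2 ≤ ((L : ℝ) + T) * (k * T + (T * T - T)) := by
    have hcs := sq_sum_le_card_mul_sum_sq (s := J) (f := fun j => (n j : ℝ))
    have hsum1 : ∑ j ∈ J, (n j : ℝ) = (k : ℝ) * T := by
      rw [← Nat.cast_sum, h1]; push_cast; ring
    have hsum2 : ∑ j ∈ J, ((n j : ℝ)) ^ 2 ≤ (k : ℝ) * T + (T * T - T) := by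
      have : ∑ j ∈ J, ((n j : ℝ)) ^ 2 = ((∑ j ∈ J, n j * n j : ℕ) : ℝ) := by
        push_cast; refine Finset.sum_congr rfl fun j _ => by ring
      rw [this]
      have hc : ((∑ j ∈ J, n j * n j : ℕ) : ℝ) ≤ ((k * T + (T * T - T) : ℕ) : ℝ) := by
        exact_mod_cast h2'
      refine hc.trans_eq ?_
      have hTT : T ≤ T * T := Nat.le_mul_of_pos_left T hT
      push_cast [Nat.cast_sub hTT]
      ring
    have hcard : (J.card : ℝ) = (L : ℝ) + T := by rw [hJcard]; push_cast; ring
    calc ((k : ℝ) * T) ^ 2 = (∑ j ∈ J, (n j : ℝ)) ^ 2 := by rw [hsum1]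
      _ ≤ (J.card : ℝ) * ∑ j ∈ J, ((n j : ℝ)) ^ 2 := hcs
      _ ≤ ((L : ℝ) + T) * (k * T + (T * T - T)) := by
          rw [hcard]
          refine mul_le_mul_of_nonneg_left hsum2 ?_
          positivity
  -- final algebra
  have hLZ : (L : ℤ) = M - m := by rw [hL]; omega
  have hLx : ((M - m : ℤ) : ℝ) = (L : ℝ) := by rw [← hLZ]; push_cast; ring
  rw [hLx]
  have hTpos : (0 : ℝ) < T := by exact_mod_cast hT
  have hk1' : (1 : ℝ) ≤ k := by exact_mod_cast hk1
  have hpos : (0 : ℝ) < (T : ℝ) + k - 1 := by linarith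
  rw [ge_iff_le, sub_le_iff_le_add, div_le_iff₀ hpos]
  nlinarith [hCS, hTpos, hk1', mul_pos hTpos hTpos]
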